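/- For every unit vector ψ ∈ ℂ³ (so that ψψ† is a pure state), the output of the j = 1 Landau–Streater channel satisfies tr[ (Φ(ψψ†))² ] = 1/2; moreover the eigenvalues of Φ(ψψ†) (counted with multiplicity) are 1/2, 1/2, 0. -/

import Mathlib

open Matrix Complex

noncomputable section

/-- Spin-1 matrix `Jₓ = (1/√2)·[[0,1,0],[1,0,1],[0,1,0]]`. -/
def J1x : Matrix (Fin 3) (Fin 3) ℂ :=
  ((Real.sqrt 2 : ℂ))⁻¹ • !![0, 1, 0; 1, 0, 1; 0, 1, 0]

/-- Spin-1 matrix `J_y = (1/√2)·[[0,-i,0],[i,0,-i],[0,i,0]]`. -/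
def J1y : Matrix (Fin 3) (Fin 3) ℂ :=
  ((Real.sqrt 2 : ℂ))⁻¹ • !![0, -Complex.I, 0; Complex.I, 0, -Complex.I; 0, Complex.I, 0]

/-- Spin-1 matrix `J_z = diag(1,0,-1)`. -/
def J1z : Matrix (Fin 3) (Fin 3) ℂ := !![1, 0, 0; 0, 0, 0; 0, 0, -1]

/-- The spin-1 (j = 1) Landau–Streater map `Φ(X) = (JₓXJₓ + J_yXJ_y + J_zXJ_z)/2`. -/
def LS1 (X : Matrix (Fin 3) (Fin 3) ℂ) : Matrix (Fin 3) (Fin 3) ℂ :=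
  (1/2 : ℂ) • (J1x * X * J1x + J1y * X * J1y + J1z * X * J1z)

end

lemma sqrt2_inv_sq : ((Real.sqrt 2 : ℂ))⁻¹ * ((Real.sqrt 2 : ℂ))⁻¹ = 1/2 := by
  rw [← mul_inv]
  norm_cast
  rw [Real.mul_self_sqrt (by norm_num : (0:ℝ) ≤ 2)]
  norm_num


set_option maxHeartbeats 2000000 in
/-- for every unit vector `ψ ∈ ℂ³`, the output `Φ(ψψ†)` of the j = 1
Landau–Streater channel has purity `tr[(Φ(ψψ†))²] = 1/2` and eigenvalues (with
multiplicity) `1/2, 1/2, 0`. -/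
theorem landau_streater_spin1_output_purity (ψ : Fin 3 → ℂ)
    (hψ : ∑ i, ‖ψ i‖ ^ 2 = 1) :
    ((LS1 (Matrix.vecMulVec ψ (star ψ))) * (LS1 (Matrix.vecMulVec ψ (star ψ)))).trace
        = 1/2 ∧
      (LS1 (Matrix.vecMulVec ψ (star ψ))).charpoly =
        (Polynomial.X - Polynomial.C (1/2 : ℂ)) ^ 2 * Polynomial.X := by
  have key : ∀ z : ℂ, ((‖z‖ : ℂ)) ^ 2 = z * (starRingEnd ℂ) z := by
    intro z
    rw [← Complex.ofReal_pow, Complex.sq_norm, Complex.mul_conj]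
  have hψ' : ψ 0 * (starRingEnd ℂ) (ψ 0) + ψ 1 * (starRingEnd ℂ) (ψ 1)
      + ψ 2 * (starRingEnd ℂ) (ψ 2) = 1 := by
    have h := congrArg (Complex.ofReal) hψ
    rw [Fin.sum_univ_three] at h
    push_cast at h
    rw [key, key, key] at h
    exact h
  set φ : Fin 3 → ℂ :=
    ![(starRingEnd ℂ) (ψ 2), -(starRingEnd ℂ) (ψ 1), (starRingEnd ℂ) (ψ 0)] with hφdef
  set P : Matrix (Fin 3) (Fin 3) ℂ := Matrix.vecMulVec φ (star φ) with hPdef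
  have hx : J1x * (Matrix.vecMulVec ψ (star ψ)) * J1x
      = (1/2 : ℂ) • (!![0, 1, 0; 1, 0, 1; 0, 1, 0] * (Matrix.vecMulVec ψ (star ψ))
          * !![0, 1, 0; 1, 0, 1; 0, 1, 0]) := by
    rw [J1x, Matrix.smul_mul, Matrix.smul_mul, Matrix.mul_smul, smul_smul, sqrt2_inv_sq]
  have hJy : J1y = ((Real.sqrt 2 : ℂ))⁻¹ • Complex.I • !![0, -1, 0; 1, 0, -1; 0, 1, 0] := by
    rw [J1y]
    congr 1
    ext i j
    fin_cases i <;> fin_cases j <;> simp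
  have hy : J1y * (Matrix.vecMulVec ψ (star ψ)) * J1y
      = (-(1/2) : ℂ) • (!![0, -1, 0; 1, 0, -1; 0, 1, 0] * (Matrix.vecMulVec ψ (star ψ))
          * !![0, -1, 0; 1, 0, -1; 0, 1, 0]) := by
    rw [hJy, Matrix.smul_mul, Matrix.smul_mul, Matrix.mul_smul, Matrix.smul_mul,
      Matrix.smul_mul, Matrix.mul_smul, smul_smul, smul_smul, smul_smul]
    congr 1
    linear_combination (Complex.I * Complex.I) * sqrt2_inv_sq + (1/2 : ℂ) * Complex.I_mul_I
  have hA : LS1 (Matrix.vecMulVec ψ (star ψ))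
      = (1/2 : ℂ) • ((1 : Matrix (Fin 3) (Fin 3) ℂ) - P) := by
    rw [LS1, hx, hy]
    ext i j
    fin_cases i <;> fin_cases j <;>
      simp [hPdef, hφdef, J1z, Matrix.mul_apply, Matrix.vecMul, dotProduct, -Matrix.cons_vecMulVec, -Matrix.vecMulVec_cons,
        Fin.sum_univ_three, Matrix.vecMulVec_apply, Matrix.one_apply, Pi.star_apply,
        Complex.star_def, map_neg, Complex.conj_conj, Matrix.vecHead, Matrix.vecTail,
        Function.comp]
    all_goals try ring1
    all_goals linear_combination hψ'
  have hP2 : P * P = P := by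
    have hs : ∀ i j : Fin 3, (P * P) i j
        = ((starRingEnd ℂ) (ψ 2) * ψ 2 + (starRingEnd ℂ) (ψ 1) * ψ 1
            + (starRingEnd ℂ) (ψ 0) * ψ 0) * P i j := by
      intro i j
      fin_cases i <;> fin_cases j <;> simp [hPdef, hφdef, Matrix.mul_apply, Fin.sum_univ_three, Matrix.vecMulVec_apply,
          -Matrix.cons_vecMulVec, -Matrix.vecMulVec_cons,
        Pi.star_apply, Complex.star_def, map_neg, Complex.conj_conj] <;> ring
    ext i j
    rw [hs i j]
    have : (starRingEnd ℂ) (ψ 2) * ψ 2 + (starRingEnd ℂ) (ψ 1) * ψ 1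
        + (starRingEnd ℂ) (ψ 0) * ψ 0 = 1 := by linear_combination hψ'
    rw [this, one_mul]
  constructor
  · rw [hA, Matrix.smul_mul, Matrix.mul_smul, smul_smul]
    have h1 : ((1 : Matrix (Fin 3) (Fin 3) ℂ) - P) * ((1 : Matrix (Fin 3) (Fin 3) ℂ) - P)
        = (1 : Matrix (Fin 3) (Fin 3) ℂ) - P := by
      rw [sub_mul, mul_sub, mul_sub, hP2]
      simp
    rw [h1, Matrix.trace_smul, Matrix.trace_sub, Matrix.trace_one]
    have htrP : P.trace = 1 := by
      rw [Matrix.trace_fin_three]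
      simp [hPdef, hφdef, Matrix.vecMulVec_apply, Pi.star_apply, Complex.star_def,
        map_neg, Complex.conj_conj]
      linear_combination hψ'
    rw [htrP]
    simp
    norm_num
  · have hC := congrArg (Polynomial.C : ℂ →+* Polynomial ℂ) hψ'
    simp only [Polynomial.C_add, Polynomial.C_mul, Polynomial.C_1] at hC
    rw [hA, Matrix.charpoly, Matrix.det_fin_three]
    simp only [Matrix.charmatrix_apply, Matrix.diagonal_apply, Matrix.smul_apply,
      Matrix.sub_apply, Matrix.one_apply, Matrix.vecMulVec_apply, hPdef, hφdef]
    simp [Pi.star_apply, Complex.star_def, map_neg, Complex.conj_conj, Polynomial.C_sub,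
      Polynomial.C_mul, Polynomial.C_add, Polynomial.C_1, Polynomial.C_neg,
      Matrix.scalar_apply, Matrix.diagonal_apply]
    linear_combination (Polynomial.C (2⁻¹ : ℂ) * Polynomial.X ^ 2
      - 2 * Polynomial.C (2⁻¹ : ℂ) ^ 2 * Polynomial.X + Polynomial.C (2⁻¹ : ℂ) ^ 3) * hC
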